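/- Let A be a (d+1)×(d+1) real matrix, Ā its N-th induced matrix, and B the diagonal matrix indexed by multi-indices of total degree N with entries B_{mm} = multinomial(N; m_0,...,m_d). Then the induced matrix of the transpose satisfies (Aᵀ)‾ = B⁻¹ (Ā)ᵀ B. -/

import Mathlib

open Finset Matrix

/-- Linear independence of monomial functions on `ℝ^ι`. -/
lemma monomial_coeffs_eq_zero {ι : Type*} [Fintype ι] [DecidableEq ι]
    (S : Finset (ι → ℕ)) (c : (ι → ℕ) → ℝ)
    (h : ∀ x : ι → ℝ, ∑ k ∈ S, c k * ∏ j, x j ^ k j = 0) :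
    ∀ k ∈ S, c k = 0 := by
  intro k hk
  set e : (ι → ℕ) ≃ (ι →₀ ℕ) := Finsupp.equivFunOnFinite.symm with he
  set p : MvPolynomial ι ℝ := ∑ l ∈ S, MvPolynomial.monomial (e l) (c l) with hp
  have heval : ∀ x : ι → ℝ, MvPolynomial.eval x p = 0 := by
    intro x
    rw [hp, map_sum, ← h x]
    refine Finset.sum_congr rfl fun l hl => ?_
    rw [MvPolynomial.eval_monomial]
    congr 1
    rw [Finsupp.prod_fintype]
    · simp [he]
    · intro i; simp
  have hp0 : p = 0 := by
    apply MvPolynomial.funext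
    intro x; simp [heval x]
  have := congrArg (MvPolynomial.coeff (e k)) hp0
  rw [hp] at this
  rw [MvPolynomial.coeff_sum, MvPolynomial.coeff_zero, Finset.sum_eq_single k] at this
  · rwa [MvPolynomial.coeff_monomial, if_pos rfl] at this
  · intro l hl hlk
    rw [MvPolynomial.coeff_monomial, if_neg (fun hh => hlk (e.injective hh))]
  · intro hh; exact absurd hk hh

/-- Transpose Lemma: the induced matrix of the transpose satisfies
`(Aᵀ)‾ = B⁻¹ (Ā)ᵀ B`, where `B` is the diagonal matrix of multinomial
coefficients at level `N`. Entrywise: `(Aᵀ)‾_{mn} = (B_m)⁻¹ · Ā_{nm} · B_n`. -/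
theorem induced_matrix_transpose_lemma
    (d N : ℕ)
    (A : Matrix (Fin (d + 1)) (Fin (d + 1)) ℝ)
    (Abar ATbar : (Fin (d + 1) → ℕ) → (Fin (d + 1) → ℕ) → ℝ)
    (hA : ∀ m ∈ Finset.Nat.antidiagonalTuple (d + 1) N, ∀ v : Fin (d + 1) → ℝ,
      ∏ i, (∑ j, A i j * v j) ^ m i =
        ∑ n ∈ Finset.Nat.antidiagonalTuple (d + 1) N,
          Abar m n * ∏ j, v j ^ n j)
    (hAT : ∀ m ∈ Finset.Nat.antidiagonalTuple (d + 1) N, ∀ v : Fin (d + 1) → ℝ,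
      ∏ i, (∑ j, Aᵀ i j * v j) ^ m i =
        ∑ n ∈ Finset.Nat.antidiagonalTuple (d + 1) N,
          ATbar m n * ∏ j, v j ^ n j) :
    ∀ m ∈ Finset.Nat.antidiagonalTuple (d + 1) N,
      ∀ n ∈ Finset.Nat.antidiagonalTuple (d + 1) N,
        ATbar m n =
          (Nat.multinomial Finset.univ m : ℝ)⁻¹ * Abar n m *
            (Nat.multinomial Finset.univ n : ℝ) := by
  intro m hm n hn
  set S := Finset.Nat.antidiagonalTuple (d + 1) N with hSdef
  have hS : S = piAntidiag (univ : Finset (Fin (d + 1))) N := by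
    ext k
    simp [hSdef, Finset.Nat.mem_antidiagonalTuple]
  -- the key bilinear identity
  have key : ∀ x y : Fin (d + 1) → ℝ,
      ∑ k ∈ S, (Nat.multinomial Finset.univ k : ℝ) * (∏ j, x j ^ k j) *
          (∑ l ∈ S, Abar k l * ∏ j, y j ^ l j)
        = ∑ l ∈ S, (Nat.multinomial Finset.univ l : ℝ) * (∏ j, y j ^ l j) *
          (∑ k ∈ S, ATbar l k * ∏ j, x j ^ k j) := by
    intro x y
    have h1 : ∑ k ∈ S, (Nat.multinomial Finset.univ k : ℝ) * (∏ j, x j ^ k j) *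
          (∑ l ∈ S, Abar k l * ∏ j, y j ^ l j)
        = (∑ i, x i * ∑ j, A i j * y j) ^ N := by
      rw [Finset.sum_pow_eq_sum_piAntidiag, ← hS]
      refine Finset.sum_congr rfl fun k hk => ?_
      rw [← hA k hk y]
      simp [mul_pow, Finset.prod_mul_distrib, mul_assoc]
    have h2 : ∑ l ∈ S, (Nat.multinomial Finset.univ l : ℝ) * (∏ j, y j ^ l j) *
          (∑ k ∈ S, ATbar l k * ∏ j, x j ^ k j)
        = (∑ i, y i * ∑ j, Aᵀ i j * x j) ^ N := by
      rw [Finset.sum_pow_eq_sum_piAntidiag, ← hS]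
      refine Finset.sum_congr rfl fun l hl => ?_
      rw [← hAT l hl x]
      simp [mul_pow, Finset.prod_mul_distrib, mul_assoc]
    have h3 : (∑ i, x i * ∑ j, A i j * y j) = ∑ i, y i * ∑ j, Aᵀ i j * x j := by
      simp only [Matrix.transpose_apply, Finset.mul_sum]
      rw [Finset.sum_comm]
      exact Finset.sum_congr rfl fun i _ => Finset.sum_congr rfl fun j _ => by ring
    rw [h1, h2, h3]
  -- Step A: extract the coefficient of x^n
  have stepA : ∀ y : Fin (d + 1) → ℝ,
      (Nat.multinomial Finset.univ n : ℝ) * (∑ l ∈ S, Abar n l * ∏ j, y j ^ l j)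
        = ∑ l ∈ S, (Nat.multinomial Finset.univ l : ℝ) * (∏ j, y j ^ l j) * ATbar l n := by
    intro y
    have hx : ∀ x : Fin (d + 1) → ℝ,
        ∑ k ∈ S, ((Nat.multinomial Finset.univ k : ℝ) *
            (∑ l ∈ S, Abar k l * ∏ j, y j ^ l j)
          - ∑ l ∈ S, (Nat.multinomial Finset.univ l : ℝ) * (∏ j, y j ^ l j) * ATbar l k)
            * ∏ j, x j ^ k j = 0 := by
      intro x
      have hk := key x y
      simp only [sub_mul, Finset.sum_sub_distrib]
      rw [sub_eq_zero]
      calc ∑ k ∈ S, (Nat.multinomial Finset.univ k : ℝ) *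
              (∑ l ∈ S, Abar k l * ∏ j, y j ^ l j) * ∏ j, x j ^ k j
          = ∑ k ∈ S, (Nat.multinomial Finset.univ k : ℝ) * (∏ j, x j ^ k j) *
              (∑ l ∈ S, Abar k l * ∏ j, y j ^ l j) := by
            exact Finset.sum_congr rfl fun k _ => by ring
        _ = ∑ l ∈ S, (Nat.multinomial Finset.univ l : ℝ) * (∏ j, y j ^ l j) *
              (∑ k ∈ S, ATbar l k * ∏ j, x j ^ k j) := hk
        _ = ∑ l ∈ S, ∑ k ∈ S, (Nat.multinomial Finset.univ l : ℝ) * (∏ j, y j ^ l j) *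
              ATbar l k * (∏ j, x j ^ k j) := by
            refine Finset.sum_congr rfl fun l _ => ?_
            rw [Finset.mul_sum]
            exact Finset.sum_congr rfl fun k _ => by ring
        _ = ∑ k ∈ S, (∑ l ∈ S, (Nat.multinomial Finset.univ l : ℝ) * (∏ j, y j ^ l j) *
              ATbar l k) * ∏ j, x j ^ k j := by
            rw [Finset.sum_comm]
            refine Finset.sum_congr rfl fun k _ => ?_
            rw [Finset.sum_mul]
    have := monomial_coeffs_eq_zero S _ hx n hn
    linarith [this]
  -- Step B: extract the coefficient of y^m
  have stepB : (Nat.multinomial Finset.univ n : ℝ) * Abar n m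
      = (Nat.multinomial Finset.univ m : ℝ) * ATbar m n := by
    have hy : ∀ y : Fin (d + 1) → ℝ,
        ∑ l ∈ S, ((Nat.multinomial Finset.univ n : ℝ) * Abar n l
          - (Nat.multinomial Finset.univ l : ℝ) * ATbar l n) * ∏ j, y j ^ l j = 0 := by
      intro y
      have hk := stepA y
      simp only [sub_mul, Finset.sum_sub_distrib]
      rw [sub_eq_zero]
      calc ∑ l ∈ S, (Nat.multinomial Finset.univ n : ℝ) * Abar n l * ∏ j, y j ^ l j
          = (Nat.multinomial Finset.univ n : ℝ) * ∑ l ∈ S, Abar n l * ∏ j, y j ^ l j := by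
            rw [Finset.mul_sum]
            exact Finset.sum_congr rfl fun l _ => by ring
        _ = ∑ l ∈ S, (Nat.multinomial Finset.univ l : ℝ) * (∏ j, y j ^ l j) * ATbar l n := hk
        _ = ∑ l ∈ S, (Nat.multinomial Finset.univ l : ℝ) * ATbar l n * ∏ j, y j ^ l j := by
            exact Finset.sum_congr rfl fun l _ => by ring
    have := monomial_coeffs_eq_zero S _ hy m hm
    linarith [this]
  have hBm : (Nat.multinomial Finset.univ m : ℝ) ≠ 0 := by
    exact_mod_cast (Nat.multinomial_pos _ _).ne'
  field_simp
  linarith [stepB]
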